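/- For every r ∈ (0,1), both marginals of ν_r coincide and equal (r/c_r) times the uniform distribution on [0,r]: ν_r^x = ν_r^y = (r/c_r)·U(r). -/
import Mathlib


open MeasureTheory Set

noncomputable section

/-- The full tent map on `[0,1]`. -/
def T2 : ℝ → ℝ := fun x => 2 * min x (1 - x)

/-- The rescaled tent map `t_r` on `[0,r]`. -/
def tent (r : ℝ) : ℝ → ℝ := fun x => 2 * min x (r - x)

/-- The normalizing constant `c_r = -log(1-r)`. -/
def cr (r : ℝ) : ℝ := -Real.log (1 - r)

/-- The measure `μ_r`, supported on the diagonal `Δ_r`. -/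
def muR (r : ℝ) : Measure (ℝ × ℝ) :=
  ((volume.restrict (Icc (0:ℝ) r)).withDensity
      (fun s => ENNReal.ofReal ((cr r)⁻¹ * (s / (1 - s))))).map (fun s => (s, s))

/-- The measure `ν_r`, supported on the graph `Γ_r` of `t_r`. -/
def nuR (r : ℝ) : Measure (ℝ × ℝ) :=
  ((volume.restrict (Icc (0:ℝ) r)).withDensity
      (fun _ => ENNReal.ofReal (cr r)⁻¹)).map (fun s => (s, tent r s))

/-- The uniform probability distribution on `[0,r]`. -/
def unif (r : ℝ) : Measure ℝ := (ENNReal.ofReal r)⁻¹ • volume.restrict (Icc (0:ℝ) r)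

/-- The family `R`: pairs of nonnegative finite Borel measures on `[0,1]²`
with the marginal balance conditions. -/
structure MemR (μ ν : Measure (ℝ × ℝ)) : Prop where
  fin_mu : μ univ ≠ ⊤
  fin_nu : ν univ ≠ ⊤
  supp_mu : μ ((Icc (0:ℝ) 1 ×ˢ Icc (0:ℝ) 1)ᶜ) = 0
  supp_nu : ν ((Icc (0:ℝ) 1 ×ˢ Icc (0:ℝ) 1)ᶜ) = 0
  eq_x : ∀ A : Set ℝ, MeasurableSet A →
    ∫⁻ x in A, ENNReal.ofReal (1 - x) ∂(μ.map Prod.fst) =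
      ∫⁻ x in A, ENNReal.ofReal x ∂(ν.map Prod.fst)
  eq_y : ∀ B : Set ℝ, MeasurableSet B →
    ∫⁻ y in B, ENNReal.ofReal (1 - y) ∂(μ.map Prod.snd) =
      ∫⁻ y in B, ENNReal.ofReal y ∂(ν.map Prod.snd)

/-- A coherent distribution: a probability measure on `[0,1]²` of the form
`μ + ν` for some `(μ,ν) ∈ R`. -/
def Coherent (m : Measure (ℝ × ℝ)) : Prop :=
  IsProbabilityMeasure m ∧ ∃ μ ν : Measure (ℝ × ℝ), MemR μ ν ∧ m = μ + ν




lemma tent_measurable (r : ℝ) : Measurable (tent r) := by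
  unfold tent
  fun_prop

lemma map_tent (r : ℝ) :
    (volume.restrict (Icc (0:ℝ) r)).map (tent r) = volume.restrict (Icc (0:ℝ) r) := by
  ext s hs
  rw [Measure.map_apply (tent_measurable r) hs, Measure.restrict_apply hs,
    Measure.restrict_apply ((tent_measurable r) hs)]
  set t := s ∩ Icc (0:ℝ) r with ht
  have ht' : MeasurableSet t := hs.inter measurableSet_Icc
  set A₁ : Set ℝ := (fun x => 2*x) ⁻¹' t with hA₁
  set A₂ : Set ℝ := (fun x => 2*(r-x)) ⁻¹' t with hA₂
  have hsplit : tent r ⁻¹' s ∩ Icc 0 r = (A₁ ∩ Iic (r/2)) ∪ (A₂ ∩ Ioi (r/2)) := by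
    ext x
    simp only [mem_inter_iff, mem_preimage, mem_Icc, mem_union, mem_Iic, mem_Ioi, hA₁, hA₂, ht,
      tent]
    constructor
    · rintro ⟨hxs, hx0, hxr⟩
      rcases le_or_gt x (r/2) with h | h
      · have hmin : min x (r - x) = x := min_eq_left (by linarith)
        rw [hmin] at hxs
        exact Or.inl ⟨⟨hxs, by linarith, by linarith⟩, h⟩
      · have hmin : min x (r - x) = r - x := min_eq_right (by linarith)
        rw [hmin] at hxs
        exact Or.inr ⟨⟨hxs, by linarith, by linarith⟩, h⟩
    · rintro (⟨⟨hxs, h0, h1⟩, h⟩ | ⟨⟨hxs, h0, h1⟩, h⟩)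
      · have hmin : min x (r - x) = x := min_eq_left (by linarith)
        exact ⟨by rw [hmin]; exact hxs, by linarith, by linarith⟩
      · have hmin : min x (r - x) = r - x := min_eq_right (by linarith)
        exact ⟨by rw [hmin]; exact hxs, by linarith, by linarith⟩
  have hA₁sub : A₁ ⊆ Iic (r/2) := by
    intro x hx
    have : 2*x ∈ Icc (0:ℝ) r := hx.2
    simp only [mem_Icc] at this
    simp only [mem_Iic]; linarith [this.2]
  have hA₂sub : A₂ ⊆ Icc (r/2) r := by
    intro x hx
    have : 2*(r-x) ∈ Icc (0:ℝ) r := hx.2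
    simp only [mem_Icc] at this
    constructor <;> [linarith [this.2]; linarith [this.1]]
  have hmA₁ : MeasurableSet A₁ := ht'.preimage (by fun_prop)
  have hmA₂ : MeasurableSet A₂ := ht'.preimage (by fun_prop)
  have hdisj : Disjoint (A₁ ∩ Iic (r/2)) (A₂ ∩ Ioi (r/2)) := by
    apply Disjoint.mono inter_subset_right inter_subset_right
    exact Iic_disjoint_Ioi le_rfl
  have hvA₁ : volume A₁ = ENNReal.ofReal 2⁻¹ * volume t := by
    rw [hA₁, Real.volume_preimage_mul_left two_ne_zero t]
    norm_num [abs_of_pos]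
  have hvA₂ : volume A₂ = ENNReal.ofReal 2⁻¹ * volume t := by
    have heq : A₂ = (fun x => (-2)*x) ⁻¹' ((fun y => y + 2*r) ⁻¹' t) := by
      ext x; simp only [hA₂, mem_preimage]; ring_nf
    rw [heq, Real.volume_preimage_mul_left (by norm_num : (-2:ℝ) ≠ 0),
      measure_preimage_add_right volume (2*r) t]
    norm_num [abs_of_pos]
  have hvA₂' : volume (A₂ ∩ Ioi (r/2)) = volume A₂ := by
    apply le_antisymm (measure_mono inter_subset_left)
    have : A₂ ⊆ (A₂ ∩ Ioi (r/2)) ∪ {r/2} := by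
      intro x hx
      rcases eq_or_lt_of_le (hA₂sub hx).1 with h | h
      · exact Or.inr (by simp [← h])
      · exact Or.inl ⟨hx, h⟩
    calc volume A₂ ≤ volume ((A₂ ∩ Ioi (r/2)) ∪ {r/2}) := measure_mono this
      _ ≤ volume (A₂ ∩ Ioi (r/2)) + volume ({r/2} : Set ℝ) := measure_union_le _ _
      _ = volume (A₂ ∩ Ioi (r/2)) := by simp
  rw [hsplit, measure_union hdisj (hmA₂.inter measurableSet_Ioi),
    inter_eq_left.mpr hA₁sub, hvA₂', hvA₁, hvA₂]
  rw [← two_mul, ← ENNReal.ofReal_ofNat, ← mul_assoc,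
    ← ENNReal.ofReal_mul (by norm_num : (0:ℝ) ≤ 2)]
  norm_num

/-- both marginals of `ν_r` equal `(r/c_r)·U(r)`. -/
theorem nuR_marginals (r : ℝ) (hr : r ∈ Ioo (0:ℝ) 1) :
    (nuR r).map Prod.fst = ENNReal.ofReal (r / cr r) • unif r ∧
      (nuR r).map Prod.snd = ENNReal.ofReal (r / cr r) • unif r := by
  obtain ⟨hr0, hr1⟩ := hr
  have hcr : 0 < cr r := by
    have h : Real.log (1 - r) < 0 := Real.log_neg (by linarith) (by linarith)
    unfold cr; linarith
  have hc : ENNReal.ofReal (r / cr r) • unif r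
      = (volume.restrict (Icc (0:ℝ) r)).withDensity (fun _ => ENNReal.ofReal (cr r)⁻¹) := by
    rw [withDensity_const, unif, smul_smul]
    congr 1
    rw [div_eq_mul_inv, ENNReal.ofReal_mul hr0.le, mul_comm (ENNReal.ofReal r), mul_assoc,
      ENNReal.mul_inv_cancel (by simp [hr0]) ENNReal.ofReal_ne_top, mul_one]
  have hme : Measurable (fun s : ℝ => (s, tent r s)) :=
    measurable_id.prodMk (tent_measurable r)
  constructor
  · rw [nuR, Measure.map_map measurable_fst hme]
    have h1 : Prod.fst ∘ (fun s : ℝ => (s, tent r s)) = id := rfl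
    rw [h1, Measure.map_id, hc]
  · rw [nuR, Measure.map_map measurable_snd hme]
    have h2 : Prod.snd ∘ (fun s : ℝ => (s, tent r s)) = tent r := rfl
    rw [h2, hc, withDensity_const, Measure.map_smul, map_tent]
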